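/- arXiv:1812.07651 — 2 statements merged into one kernel-verified Lean document; each statement's English description precedes it below -/
import Mathlib

section
/- For every n ≥ k > 0 with n a power of two, there exists a set of n points in the plane spanning at most n^{log_2 3} distinct distances such that every k of the points span at least k^{log_2 3}/2 − 1 distinct distances. -/
open scoped Classical

open Pointwise Real
set_option maxHeartbeats 1000000

noncomputable def rr : ℝ := Real.logb 3 4

lemma log3_pos : (0:ℝ) < Real.log 3 := Real.log_pos (by norm_num)
lemma rr_pos : 0 < rr := Real.logb_pos (by norm_num) (by norm_num)
lemma rr_ge (p q : ℕ) (hq : 0 < q) (h : (3:ℝ)^p ≤ 4^q) : (p : ℝ)/q ≤ rr := by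
  rw [div_le_iff₀ (by positivity)]
  have h2 : Real.log (3^p : ℝ) ≤ Real.log (4^q : ℝ) := Real.log_le_log (by positivity) h
  rw [Real.log_pow, Real.log_pow] at h2
  unfold rr Real.logb
  rw [div_mul_eq_mul_div, le_div_iff₀ log3_pos]
  linarith
lemma rr_le (p q : ℕ) (hq : 0 < q) (h : (4:ℝ)^q ≤ 3^p) : rr ≤ (p:ℝ)/q := by
  rw [le_div_iff₀ (by positivity)]
  have h2 : Real.log (4^q : ℝ) ≤ Real.log (3^p : ℝ) := Real.log_le_log (by positivity) h
  rw [Real.log_pow, Real.log_pow] at h2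
  unfold rr Real.logb
  rw [div_mul_eq_mul_div, div_le_iff₀ log3_pos]
  linarith
lemma rr_ge_54 : (5/4 : ℝ) ≤ rr := by
  have := rr_ge 5 4 (by norm_num) (by norm_num); simpa using this
lemma rr_ge_6350 : (63/50 : ℝ) ≤ rr := by
  have := rr_ge 63 50 (by norm_num) (by norm_num); simpa using this
lemma rr_le_2419 : rr ≤ (24/19 : ℝ) := by
  have := rr_le 24 19 (by norm_num) (by norm_num); simpa using this
lemma rr_gt_one : 1 < rr := by have := rr_ge_54; linarith

-- Region I : 0 < x ≤ 0.282
lemma regionI (x : ℝ) (hx0 : 0 < x) (hx : x ≤ 0.282) : (1+x^rr)^2 ≤ (1+x+x^2)^rr := by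
  have hx1 : x ≤ 1 := by linarith
  have hbern : 1 + rr*(x+x^2) ≤ (1+(x+x^2))^rr :=
    one_add_mul_self_le_rpow_one_add (by nlinarith) (le_of_lt rr_gt_one)
  set s : ℝ := x ^ ((1:ℝ)/4) with hs
  have hs0 : 0 < s := Real.rpow_pos_of_pos hx0 _
  have hs4 : s^(4:ℕ) = x := by
    rw [hs, ← Real.rpow_natCast (x ^ ((1:ℝ)/4)) 4, ← Real.rpow_mul (le_of_lt hx0)]
    norm_num
  have hsle : s ≤ 0.729 := by
    have h4 : s^(4:ℕ) ≤ (0.729:ℝ)^(4:ℕ) := by rw [hs4]; exact le_trans hx (by norm_num)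
    exact le_of_pow_le_pow_left₀ (by norm_num) (by norm_num) h4
  -- x^(rr-1) ≤ s
  have hexp : x ^ (rr-1) ≤ s := by
    rw [hs]
    exact Real.rpow_le_rpow_of_exponent_ge hx0 hx1 (by have := rr_ge_54; linarith)
  have hxrr : x ^ rr = x * x^(rr-1) := by
    rw [← Real.rpow_one_add' (le_of_lt hx0) (by have := rr_gt_one; intro h; linarith [h])]
    ring_nf
  have hxrr_le : x ^ rr ≤ x * s := by
    rw [hxrr]; exact mul_le_mul_of_nonneg_left hexp (le_of_lt hx0)
  have hxs_nonneg : 0 ≤ x * s := by positivity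
  have hrr_nonneg : (0:ℝ) ≤ x ^ rr := le_of_lt (Real.rpow_pos_of_pos hx0 _)
  -- polynomial bound
  have hpoly : 2*s + s^6 ≤ (63/50)*(1+s^4) := by
    nlinarith [sq_nonneg (s-0.729), sq_nonneg s, sq_nonneg (s^2-0.5), sq_nonneg (s^3-0.38),
      pow_le_pow_left₀ (le_of_lt hs0) hsle 4, pow_le_pow_left₀ (le_of_lt hs0) hsle 6,
      sq_nonneg (s-1), sq_nonneg (s^2-s), sq_nonneg (s^3-s)]
  have hmain : 2*x^rr + (x^rr)^2 ≤ rr*(x+x^2) := by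
    have h1 : (x^rr)^2 ≤ (x*s)^2 := by
      apply pow_le_pow_left₀ hrr_nonneg hxrr_le
    have h2 : rr*(x+x^2) ≥ (63/50)*(x+x^2) := by
      apply mul_le_mul_of_nonneg_right rr_ge_6350 (by positivity)
    have key : 2*(x*s) + (x*s)^2 ≤ (63/50)*(x+x^2) := by
      have hx4 : x = s^4 := hs4.symm
      rw [hx4]
      calc 2*(s^4*s) + (s^4*s)^2 = s^4*(2*s+s^6) := by ring
      _ ≤ s^4*((63/50)*(1+s^4)) := by
          apply mul_le_mul_of_nonneg_left hpoly (by positivity)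
      _ = 63/50*(s^4+(s^4)^2) := by ring
    nlinarith [hxrr_le, h1]
  calc (1+x^rr)^2 = 1 + (2*x^rr + (x^rr)^2) := by ring
  _ ≤ 1 + rr*(x+x^2) := by linarith
  _ ≤ (1+x+x^2)^rr := by
      have : 1+(x+x^2) = 1+x+x^2 := by ring
      rw [← this]; exact hbern

lemma three_rpow_rr : (3:ℝ) ^ rr = 4 := Real.rpow_logb (by norm_num) (by norm_num) (by norm_num)

lemma polyIII (t : ℝ) (h0 : (0.9355:ℝ) ≤ t) (h1 : t ≤ 1) : 1+2*t^19 ≤ t^5*(2+t^19) := by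
  have ht0 : (0:ℝ) ≤ t := by linarith
  have h13 : (0.9355:ℝ)^13 ≤ t^13 := pow_le_pow_left₀ (by norm_num) h0 13
  have hc : (0.42:ℝ) ≤ t^13 := by nlinarith [h13]
  have key : 25*(1-t) ≤ 4*t^13 := by nlinarith
  have hS5 : 1+t+t^2+t^3+t^4 ≤ 5 := by
    have h2 : t^2 ≤ 1 := pow_le_one₀ ht0 h1
    have h3 : t^3 ≤ 1 := pow_le_one₀ ht0 h1
    have h4 : t^4 ≤ 1 := pow_le_one₀ ht0 h1
    linarith
  have hS5nn : (0:ℝ) ≤ 1+t+t^2+t^3+t^4 := by positivity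
  have e2 : (1-t)*((1+t+t^2+t^3+t^4)^2) ≤ (1-t)*25 := by
    apply mul_le_mul_of_nonneg_left _ (by linarith)
    nlinarith [hS5, hS5nn]
  have e10 : t^13 ≤ t^10 := pow_le_pow_of_le_one ht0 h1 (by norm_num)
  have e11 : t^13 ≤ t^11 := pow_le_pow_of_le_one ht0 h1 (by norm_num)
  have e12 : t^13 ≤ t^12 := pow_le_pow_of_le_one ht0 h1 (by norm_num)
  have id1 : t^5*(1+t+t^2+t^3+t^4+t^5+t^6+t^7+t^8) - (1+t+t^2+t^3+t^4)
      = t^10+t^11+t^12+t^13 - (1-t)*(1+t+t^2+t^3+t^4)^2 := by ring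
  have claim2 : (1+t+t^2+t^3+t^4) ≤ t^5*(1+t+t^2+t^3+t^4+t^5+t^6+t^7+t^8) := by linarith
  have h1914 : t^19 ≤ t^14 := pow_le_pow_of_le_one ht0 h1 (by norm_num)
  have e3 : t^19*(1+t+t^2+t^3+t^4) ≤ t^14*(1+t+t^2+t^3+t^4) :=
    mul_le_mul_of_nonneg_right h1914 hS5nn
  have idR : (t^5+t^6+t^7+t^8+t^9+t^10+t^11+t^12+t^13+t^14+t^15+t^16+t^17+t^18)
      - (1+t+t^2+t^3+t^4) - t^14*(1+t+t^2+t^3+t^4)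
      = t^5*(1+t+t^2+t^3+t^4+t^5+t^6+t^7+t^8) - (1+t+t^2+t^3+t^4) := by ring
  have hR : (0:ℝ) ≤ (t^5+t^6+t^7+t^8+t^9+t^10+t^11+t^12+t^13+t^14+t^15+t^16+t^17+t^18)
      - (1+t+t^2+t^3+t^4) - t^19*(1+t+t^2+t^3+t^4) := by linarith
  have idP : t^5*(2+t^19) - (1+2*t^19)
      = (1-t)*((t^5+t^6+t^7+t^8+t^9+t^10+t^11+t^12+t^13+t^14+t^15+t^16+t^17+t^18)
        - (1+t+t^2+t^3+t^4) - t^19*(1+t+t^2+t^3+t^4)) := by ring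
  nlinarith [mul_nonneg (by linarith : (0:ℝ) ≤ 1-t) hR, idP]

-- phi : for x in [0.282,1] : 1+2x ≤ x^(rr-1) * (2+x)
lemma phi_nonneg (x : ℝ) (hx0 : (0.282:ℝ) ≤ x) (hx1 : x ≤ 1) :
    1+2*x ≤ x^(rr-1) * (2+x) := by
  have hxpos : (0:ℝ) < x := by linarith
  set t : ℝ := x ^ ((1:ℝ)/19) with hts
  have ht0 : 0 < t := Real.rpow_pos_of_pos hxpos _
  have ht19 : t^(19:ℕ) = x := by
    rw [hts, ← Real.rpow_natCast (x ^ ((1:ℝ)/19)) 19, ← Real.rpow_mul (le_of_lt hxpos)]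
    norm_num
  have ht1 : t ≤ 1 := Real.rpow_le_one (le_of_lt hxpos) hx1 (by norm_num)
  have htlb : (0.9355:ℝ) ≤ t := by
    have h19 : (0.9355:ℝ)^(19:ℕ) ≤ t^(19:ℕ) := by rw [ht19]; exact le_trans (by norm_num) hx0
    exact le_of_pow_le_pow_left₀ (by norm_num) (le_of_lt ht0) h19
  have hpoly := polyIII t htlb ht1
  rw [ht19] at hpoly
  -- x^(5/19) = t^5
  have ht5 : t^(5:ℕ) = x ^ ((5:ℝ)/19) := by
    rw [hts, ← Real.rpow_natCast (x ^ ((1:ℝ)/19)) 5, ← Real.rpow_mul (le_of_lt hxpos)]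
    norm_num
  have hexp : x ^ ((5:ℝ)/19) ≤ x ^ (rr-1) := by
    apply Real.rpow_le_rpow_of_exponent_ge hxpos hx1
    have := rr_le_2419; linarith
  calc 1+2*x ≤ t^5*(2+x) := hpoly
  _ = x ^ ((5:ℝ)/19) * (2+x) := by rw [← ht5]
  _ ≤ x^(rr-1) * (2+x) := by
      apply mul_le_mul_of_nonneg_right hexp (by linarith)

noncomputable def Gfun : ℝ → ℝ := fun x => rr * Real.log (1+x+x^2) - 2 * Real.log (1+x^rr)

lemma Gderiv (x : ℝ) (hx0 : 0 < x) :
    HasDerivAt Gfun (rr * ((1+2*x)/(1+x+x^2)) - 2 * ((rr*x^(rr-1))/(1+x^rr))) x := by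
  have hA : (0:ℝ) < 1+x+x^2 := by positivity
  have hB : (0:ℝ) < 1+x^rr := by
    have := Real.rpow_pos_of_pos hx0 rr; linarith
  have h1 : HasDerivAt (fun y : ℝ => 1+y+y^2) (1+2*x) x := by
    have := ((hasDerivAt_id x).const_add 1).add (hasDerivAt_pow 2 x)
    exact this.congr_deriv (by norm_num)
  have hlog1 : HasDerivAt (fun y : ℝ => Real.log (1+y+y^2)) ((1+2*x)/(1+x+x^2)) x :=
    h1.log (ne_of_gt hA)
  have h2 : HasDerivAt (fun y : ℝ => (1:ℝ)+y^rr) (rr*x^(rr-1)) x :=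
    (Real.hasDerivAt_rpow_const (Or.inl (ne_of_gt hx0))).const_add 1
  have hlog2 : HasDerivAt (fun y : ℝ => Real.log (1+y^rr)) ((rr*x^(rr-1))/(1+x^rr)) x :=
    h2.log (ne_of_gt hB)
  exact (hlog1.const_mul rr).sub (hlog2.const_mul 2)

lemma G_antitone : AntitoneOn Gfun (Set.Icc (0.282:ℝ) 1) := by
  apply antitoneOn_of_deriv_nonpos (convex_Icc _ _)
  · apply ContinuousOn.sub
    · apply ContinuousOn.mul continuousOn_const
      apply ContinuousOn.log (by fun_prop)
      intro x hx; simp only [Set.mem_Icc] at hx; nlinarith [hx.1, hx.2]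
    · apply ContinuousOn.mul continuousOn_const
      apply ContinuousOn.log
      · apply ContinuousOn.add continuousOn_const
        apply ContinuousOn.rpow_const (by fun_prop)
        intro x hx; simp only [Set.mem_Icc] at hx
        left; intro h; rw [h] at hx; norm_num at hx
      · intro x hx; simp only [Set.mem_Icc] at hx
        have : (0:ℝ) < x ^ rr := Real.rpow_pos_of_pos (by linarith [hx.1]) _
        linarith
  · intro x hx
    rw [interior_Icc] at hx
    exact (Gderiv x (by linarith [hx.1])).differentiableAt.differentiableWithinAt
  · intro x hx
    rw [interior_Icc] at hx
    obtain ⟨hxl, hxr⟩ := hx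
    have hx0 : (0:ℝ) < x := by linarith
    rw [(Gderiv x hx0).deriv]
    have hA : (0:ℝ) < 1+x+x^2 := by positivity
    have hB : (0:ℝ) < 1+x^rr := by
      have := Real.rpow_pos_of_pos hx0 rr; linarith
    have hphi := phi_nonneg x (le_of_lt hxl) (le_of_lt hxr)
    have hy0 : (0:ℝ) < x^(rr-1) := Real.rpow_pos_of_pos hx0 _
    have hxrr : x ^ rr = x^(rr-1) * x := by
      rw [← Real.rpow_add_one (ne_of_gt hx0) (rr-1)]
      congr 1; ring
    -- (1+2x)/A ≤ 2 x^(rr-1)/B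
    have hkey : (1+2*x)/(1+x+x^2) ≤ 2*x^(rr-1)/(1+x^rr) := by
      rw [div_le_div_iff₀ hA hB]
      rw [hxrr]
      nlinarith [hphi]
    have h2 : rr * ((1+2*x)/(1+x+x^2)) ≤ rr * (2*x^(rr-1)/(1+x^rr)) :=
      mul_le_mul_of_nonneg_left hkey (le_of_lt rr_pos)
    have : rr * (2*x^(rr-1)/(1+x^rr)) = 2 * ((rr*x^(rr-1))/(1+x^rr)) := by ring
    linarith [h2, this ▸ h2]

lemma G_one : Gfun 1 = 0 := by
  unfold Gfun
  rw [Real.one_rpow]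
  have h3 : (1:ℝ)+1+1^2 = 3 := by norm_num
  have h2 : (1:ℝ)+1 = 2 := by norm_num
  rw [h3, h2]
  have : rr * Real.log 3 = Real.log (3 ^ rr : ℝ) := (Real.log_rpow (by norm_num) rr).symm
  rw [this, three_rpow_rr]
  have : (4:ℝ) = 2^(2:ℕ) := by norm_num
  rw [this, Real.log_pow]
  ring

lemma regionIII (x : ℝ) (hx0 : (0.282:ℝ) ≤ x) (hx1 : x ≤ 1) : (1+x^rr)^2 ≤ (1+x+x^2)^rr := by
  have hxpos : (0:ℝ) < x := by linarith
  have hG : 0 ≤ Gfun x := by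
    rw [← G_one]
    exact G_antitone (Set.mem_Icc.mpr ⟨hx0, hx1⟩) (Set.mem_Icc.mpr ⟨by norm_num, le_refl 1⟩) hx1
  unfold Gfun at hG
  have hA : (0:ℝ) < 1+x+x^2 := by positivity
  have hB : (0:ℝ) < 1+x^rr := by
    have := Real.rpow_pos_of_pos hxpos rr; linarith
  have h1 : rr * Real.log (1+x+x^2) = Real.log ((1+x+x^2)^rr) := (Real.log_rpow hA rr).symm
  have h2 : 2 * Real.log (1+x^rr) = Real.log ((1+x^rr)^(2:ℕ)) := by rw [Real.log_pow]; push_cast; ring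
  rw [h1, h2] at hG
  exact (Real.log_le_log_iff (by positivity : (0:ℝ) < (1+x^rr)^2)
    (Real.rpow_pos_of_pos hA rr)).mp (by linarith)

lemma star01 (x : ℝ) (hx0 : 0 ≤ x) (hx1 : x ≤ 1) : (1+x^rr)^2 ≤ (1+x+x^2)^rr := by
  rcases eq_or_lt_of_le hx0 with h|h
  · rw [← h]
    rw [Real.zero_rpow (by have := rr_gt_one; intro hh; linarith)]
    norm_num
  rcases le_total x 0.282 with h2|h2
  · exact regionI x h h2
  · exact regionIII x h2 hx1

lemma star (x : ℝ) (hx0 : 0 ≤ x) : (1+x^rr)^2 ≤ (1+x+x^2)^rr := by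
  rcases le_total x 1 with h|h
  · exact star01 x hx0 h
  · -- use star01 on 1/x
    have hxpos : (0:ℝ) < x := by linarith
    have hinv0 : (0:ℝ) ≤ x⁻¹ := by positivity
    have hinv1 : x⁻¹ ≤ 1 := by
      rw [inv_le_one_iff₀]; right; exact h
    have hs := star01 x⁻¹ hinv0 hinv1
    have hixr : (x⁻¹)^rr = (x^rr)⁻¹ := Real.inv_rpow (le_of_lt hxpos) rr
    have hxrrpos : (0:ℝ) < x^rr := Real.rpow_pos_of_pos hxpos rr
    -- (1 + x⁻¹ + x⁻¹^2) = (1+x+x^2)/x^2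
    have e1 : 1 + x⁻¹ + (x⁻¹)^2 = (1+x+x^2)/x^2 := by field_simp; ring
    have e2 : (1 + (x⁻¹)^rr)^2 = ((1+x^rr)/x^rr)^2 := by
      rw [hixr]; congr 1; field_simp; ring
    rw [e1, e2] at hs
    have e3 : ((1+x+x^2)/x^2)^rr = (1+x+x^2)^rr / (x^2)^rr := by
      apply Real.div_rpow (by positivity) (by positivity)
    rw [e3] at hs
    have e4 : (x^(2:ℕ))^rr = (x^rr)^(2:ℕ) := by
      rw [← Real.rpow_natCast x 2, ← Real.rpow_mul (le_of_lt hxpos),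
          ← Real.rpow_natCast (x^rr) 2, ← Real.rpow_mul (le_of_lt hxpos)]
      congr 1; ring
    rw [div_pow] at hs
    rw [e4] at hs
    have hpos2 : (0:ℝ) < (x^rr)^(2:ℕ) := by positivity
    calc (1+x^rr)^2 = ((1+x^rr)^2 / (x^rr)^2) * (x^rr)^2 := by field_simp
    _ ≤ ((1+x+x^2)^rr / (x^rr)^2) * (x^rr)^2 := by
        apply mul_le_mul_of_nonneg_right _ (le_of_lt hpos2)
        exact hs
    _ = (1+x+x^2)^rr := by field_simp

noncomputable def gg : ℝ := Real.logb 4 3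
lemma gg_pos : 0 < gg := Real.logb_pos (by norm_num) (by norm_num)
lemma gg_mul_rr : gg * rr = 1 := by
  unfold gg rr Real.logb
  rw [div_mul_div_comm, mul_comm]
  apply div_self; positivity
lemma rr_nonneg : (0:ℝ) ≤ rr := le_of_lt rr_pos
lemma gg_nonneg : (0:ℝ) ≤ gg := le_of_lt gg_pos

lemma two_var (b q : ℝ) (hb : 0 ≤ b) (hq : 0 ≤ q) (h : b*q ≤ 1) :
    (1+b^rr)*(1+q^rr) ≤ (1+b+q)^rr := by
  have hbrr : (0:ℝ) ≤ b^rr := Real.rpow_nonneg hb _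
  have hqrr : (0:ℝ) ≤ q^rr := Real.rpow_nonneg hq _
  have hL : (0:ℝ) ≤ (1+b^rr)*(1+q^rr) := by positivity
  have hR : (0:ℝ) ≤ (1+b+q)^rr := Real.rpow_nonneg (by linarith) _
  apply (pow_le_pow_iff_left₀ hL hR (two_ne_zero)).mp
  have hquad : (1+b+b^2)*(1+q+q^2) ≤ ((1+b+q)^2 : ℝ) := by nlinarith [mul_nonneg hb hq, sq_nonneg (b-q), mul_nonneg (mul_nonneg hb hq) (mul_nonneg hb hq), mul_nonneg (mul_nonneg hb hb) hq, mul_nonneg hb (mul_nonneg hq hq)]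
  calc ((1+b^rr)*(1+q^rr))^2 = (1+b^rr)^2 * (1+q^rr)^2 := by ring
  _ ≤ (1+b+b^2)^rr * (1+q+q^2)^rr := by
      apply mul_le_mul (star b hb) (star q hq) (by positivity) (Real.rpow_nonneg (by positivity) _)
  _ = ((1+b+b^2)*(1+q+q^2))^rr := (Real.mul_rpow (by positivity) (by positivity)).symm
  _ ≤ ((1+b+q)^2)^rr := Real.rpow_le_rpow (by positivity) hquad rr_nonneg
  _ = ((1+b+q)^rr)^2 := by
      rw [← Real.rpow_natCast (1+b+q) 2, ← Real.rpow_mul (by linarith),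
          ← Real.rpow_natCast ((1+b+q)^rr) 2, ← Real.rpow_mul (by linarith)]
      congr 1; ring

lemma one_plus_key (s t : ℝ) (hs : 0 ≤ s) (ht : 0 ≤ t) (hst : s*t ≤ 1) :
    ((1+s)*(1+t))^gg ≤ 1 + s^gg + t^gg := by
  have hsg : (0:ℝ) ≤ s^gg := Real.rpow_nonneg hs _
  have htg : (0:ℝ) ≤ t^gg := Real.rpow_nonneg ht _
  have hrs : (s^gg)^rr = s := by
    rw [← Real.rpow_mul hs, gg_mul_rr, Real.rpow_one]
  have hrt : (t^gg)^rr = t := by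
    rw [← Real.rpow_mul ht, gg_mul_rr, Real.rpow_one]
  have hprod : (s^gg)*(t^gg) ≤ 1 := by
    rw [← Real.mul_rpow hs ht]
    exact Real.rpow_le_one (mul_nonneg hs ht) hst gg_nonneg
  have h2 := two_var (s^gg) (t^gg) hsg htg hprod
  rw [hrs, hrt] at h2
  have := Real.rpow_le_rpow (by positivity) h2 gg_nonneg
  calc ((1+s)*(1+t))^gg ≤ ((1+s^gg+t^gg)^rr)^gg := this
  _ = 1 + s^gg + t^gg := by
      rw [← Real.rpow_mul (by positivity), mul_comm rr gg, gg_mul_rr, Real.rpow_one]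

lemma four_var_aux (a0 a1 b0 b1 : ℝ) (h0 : 0 ≤ a0) (h1 : 0 ≤ a1) (h2 : 0 ≤ b0) (h3 : 0 ≤ b1)
    (hle : a1*b1 ≤ a0*b0) :
    ((a0+a1)*(b0+b1))^gg ≤ (a0*b0)^gg + (a0*b1)^gg + (a1*b0)^gg := by
  have r00 : (0:ℝ) ≤ (a0*b0)^gg := Real.rpow_nonneg (mul_nonneg h0 h2) gg
  have r01 : (0:ℝ) ≤ (a0*b1)^gg := Real.rpow_nonneg (mul_nonneg h0 h3) gg
  have r10 : (0:ℝ) ≤ (a1*b0)^gg := Real.rpow_nonneg (mul_nonneg h1 h2) gg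
  rcases eq_or_lt_of_le h0 with ha0|ha0
  · have hab : a1*b1 = 0 := le_antisymm (by rw [← ha0] at hle; simpa using hle) (mul_nonneg h1 h3)
    rcases mul_eq_zero.mp hab with ha1|hb1
    · have hz : (a0+a1)*(b0+b1) = 0 := by rw [← ha0, ha1]; ring
      rw [hz, Real.zero_rpow (ne_of_gt gg_pos)]; linarith
    · have hL : (a0+a1)*(b0+b1) = a1*b0 := by rw [← ha0, hb1]; ring
      rw [hL]; linarith
  rcases eq_or_lt_of_le h2 with hb0|hb0
  · have hab : a1*b1 = 0 := le_antisymm (by rw [← hb0] at hle; simpa using hle) (mul_nonneg h1 h3)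
    rcases mul_eq_zero.mp hab with ha1|hb1
    · have hL : (a0+a1)*(b0+b1) = a0*b1 := by rw [← hb0, ha1]; ring
      rw [hL]; linarith
    · have hz : (a0+a1)*(b0+b1) = 0 := by rw [← hb0, hb1]; ring
      rw [hz, Real.zero_rpow (ne_of_gt gg_pos)]; linarith
  · set s := a1/a0 with hsdef
    set t := b1/b0 with htdef
    have hs : 0 ≤ s := div_nonneg h1 (le_of_lt ha0)
    have ht : 0 ≤ t := div_nonneg h3 (le_of_lt hb0)
    have hst : s*t ≤ 1 := by
      rw [hsdef, htdef, div_mul_div_comm, div_le_one (by positivity)]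
      linarith [hle]
    have hkey := one_plus_key s t hs ht hst
    have hA : a0+a1 = a0*(1+s) := by rw [hsdef]; field_simp
    have hB : b0+b1 = b0*(1+t) := by rw [htdef]; field_simp
    have hab0 : (0:ℝ) ≤ a0*b0 := by positivity
    have expand : ((a0+a1)*(b0+b1))^gg = (a0*b0)^gg * ((1+s)*(1+t))^gg := by
      rw [hA, hB, ← Real.mul_rpow hab0 (by positivity)]
      congr 1; ring
    have t1 : (a0*b1)^gg = (a0*b0)^gg * t^gg := by
      rw [← Real.mul_rpow hab0 ht]
      congr 1; rw [htdef]; field_simp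
    have t2 : (a1*b0)^gg = (a0*b0)^gg * s^gg := by
      rw [← Real.mul_rpow hab0 hs]
      congr 1; rw [hsdef]; field_simp
    rw [expand, t1, t2]
    calc (a0*b0)^gg * ((1+s)*(1+t))^gg ≤ (a0*b0)^gg * (1 + s^gg + t^gg) := by
          apply mul_le_mul_of_nonneg_left hkey (Real.rpow_nonneg hab0 _)
    _ = (a0*b0)^gg + (a0*b0)^gg * t^gg + (a0*b0)^gg * s^gg := by ring

lemma four_var (a0 a1 b0 b1 : ℝ) (h0 : 0 ≤ a0) (h1 : 0 ≤ a1) (h2 : 0 ≤ b0) (h3 : 0 ≤ b1) :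
    ((a0+a1)*(b0+b1))^gg ≤ max ((a0*b0)^gg) ((a1*b1)^gg) + (a0*b1)^gg + (a1*b0)^gg := by
  rcases le_total (a1*b1) (a0*b0) with h|h
  · have := four_var_aux a0 a1 b0 b1 h0 h1 h2 h3 h
    calc ((a0+a1)*(b0+b1))^gg ≤ (a0*b0)^gg + (a0*b1)^gg + (a1*b0)^gg := this
    _ ≤ max ((a0*b0)^gg) ((a1*b1)^gg) + (a0*b1)^gg + (a1*b0)^gg := by
        have := le_max_left ((a0*b0)^gg) ((a1*b1)^gg); linarith
  · have := four_var_aux a1 a0 b1 b0 h1 h0 h3 h2 h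
    calc ((a0+a1)*(b0+b1))^gg = ((a1+a0)*(b1+b0))^gg := by ring_nf
    _ ≤ (a1*b1)^gg + (a1*b0)^gg + (a0*b1)^gg := this
    _ ≤ max ((a0*b0)^gg) ((a1*b1)^gg) + (a0*b1)^gg + (a1*b0)^gg := by
        have := le_max_right ((a0*b0)^gg) ((a1*b1)^gg); linarith

open Finset in
noncomputable def cube : ℕ → Finset ℤ
  | 0 => {0}
  | (m+1) => cube m ∪ (cube m).image (· + 3^m)

lemma cube_bounds : ∀ m, ∀ x ∈ cube m, 0 ≤ x ∧ 2*x ≤ 3^m - 1 := by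
  intro m
  induction m with
  | zero => intro x hx; simp [cube] at hx; simp [hx]
  | succ m ih =>
    intro x hx
    simp only [cube, Finset.mem_union, Finset.mem_image] at hx
    rcases hx with hx | ⟨y, hy, rfl⟩
    · obtain ⟨h1, h2⟩ := ih x hx
      have : (3:ℤ)^m ≤ 3^(m+1) := by
        rw [pow_succ]; nlinarith [pow_pos (by norm_num : (0:ℤ) < 3) m]
      constructor
      · exact h1
      · linarith
    · obtain ⟨h1, h2⟩ := ih y hy
      have hp : (0:ℤ) < 3^m := pow_pos (by norm_num) m
      constructor
      · linarith
      · rw [pow_succ]; linarith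

lemma cube_card : ∀ m, (cube m).card = 2^m := by
  intro m
  induction m with
  | zero => simp [cube]
  | succ m ih =>
    rw [cube]
    rw [Finset.card_union_of_disjoint]
    · rw [Finset.card_image_of_injective _ (add_left_injective _), ih]
      ring
    · rw [Finset.disjoint_left]
      intro x hx hx'
      obtain ⟨h1, h2⟩ := cube_bounds m x hx
      simp only [Finset.mem_image] at hx'
      obtain ⟨y, hy, rfl⟩ := hx'
      obtain ⟨h3, h4⟩ := cube_bounds m y hy
      have hp : (0:ℤ) < 3^m := pow_pos (by norm_num) m
      linarith

lemma cube_succ (m : ℕ) : cube (m+1) = cube m ∪ (cube m).image (· + 3^m) := rfl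

lemma key : ∀ m (A B : Finset ℤ), A ⊆ cube m → B ⊆ cube m →
    ((A.card : ℝ) * (B.card : ℝ))^gg ≤ ((A - B).card : ℝ) := by
  intro m
  induction m with
  | zero =>
    intro A B hA hB
    rcases Finset.eq_empty_or_nonempty A with rfl|hAne
    · simp [Real.zero_rpow (ne_of_gt gg_pos)]
    rcases Finset.eq_empty_or_nonempty B with rfl|hBne
    · simp [Real.zero_rpow (ne_of_gt gg_pos)]
    have hA' : A = {0} :=
      (Finset.subset_singleton_iff.mp hA).resolve_left (Finset.nonempty_iff_ne_empty.mp hAne)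
    have hB' : B = {0} :=
      (Finset.subset_singleton_iff.mp hB).resolve_left (Finset.nonempty_iff_ne_empty.mp hBne)
    rw [hA', hB', Finset.singleton_sub_singleton]
    simp [Real.one_rpow]
  | succ m ih =>
    intro A B hA hB
    set c : ℤ := 3^m with hc
    have hcpos : (0:ℤ) < c := pow_pos (by norm_num) m
    set A0 := A ∩ cube m with hA0def
    set A1' := A \ cube m with hA1'def
    set A1 := A1'.image (· - c) with hA1def
    set B0 := B ∩ cube m with hB0def
    set B1' := B \ cube m with hB1'def
    set B1 := B1'.image (· - c) with hB1def
    have hshiftA : ∀ x ∈ A1', x - c ∈ cube m := by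
      intro x hx
      rw [hA1'def, Finset.mem_sdiff] at hx
      have hx2 := hA hx.1
      rw [cube_succ] at hx2
      rcases Finset.mem_union.mp hx2 with h|h
      · exact absurd h hx.2
      · obtain ⟨z, hz, hzx⟩ := Finset.mem_image.mp h
        have : x - c = z := by rw [← hzx]; ring
        rw [this]; exact hz
    have hshiftB : ∀ x ∈ B1', x - c ∈ cube m := by
      intro x hx
      rw [hB1'def, Finset.mem_sdiff] at hx
      have hx2 := hB hx.1
      rw [cube_succ] at hx2
      rcases Finset.mem_union.mp hx2 with h|h
      · exact absurd h hx.2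
      · obtain ⟨z, hz, hzx⟩ := Finset.mem_image.mp h
        have : x - c = z := by rw [← hzx]; ring
        rw [this]; exact hz
    have hA1sub : A1 ⊆ cube m := by
      intro x hx
      obtain ⟨y, hy, rfl⟩ := Finset.mem_image.mp hx
      exact hshiftA y hy
    have hB1sub : B1 ⊆ cube m := by
      intro x hx
      obtain ⟨y, hy, rfl⟩ := Finset.mem_image.mp hx
      exact hshiftB y hy
    have hA0sub : A0 ⊆ cube m := Finset.inter_subset_right
    have hB0sub : B0 ⊆ cube m := Finset.inter_subset_right
    have hcardA1 : A1.card = A1'.card := Finset.card_image_of_injective _ sub_left_injective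
    have hcardB1 : B1.card = B1'.card := Finset.card_image_of_injective _ sub_left_injective
    have hcardA : A.card = A0.card + A1.card := by
      rw [hcardA1, hA0def, hA1'def, Finset.card_inter_add_card_sdiff]
    have hcardB : B.card = B0.card + B1.card := by
      rw [hcardB1, hB0def, hB1'def, Finset.card_inter_add_card_sdiff]
    -- range bounds
    have hbnd0A : ∀ x ∈ A0, 0 ≤ x ∧ 2*x ≤ c - 1 := by
      intro x hx; exact cube_bounds m x (hA0sub hx)
    have hbnd0B : ∀ x ∈ B0, 0 ≤ x ∧ 2*x ≤ c - 1 := by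
      intro x hx; exact cube_bounds m x (hB0sub hx)
    have hbnd1A : ∀ x ∈ A1', 0 ≤ x - c ∧ 2*(x-c) ≤ c - 1 := by
      intro x hx; exact cube_bounds m _ (hshiftA x hx)
    have hbnd1B : ∀ x ∈ B1', 0 ≤ x - c ∧ 2*(x-c) ≤ c - 1 := by
      intro x hx; exact cube_bounds m _ (hshiftB x hx)
    set P00 := A0 - B0 with hP00
    set P11 := A1' - B1' with hP11
    set Pneg := A0 - B1' with hPneg
    set Ppos := A1' - B0 with hPpos
    have hmidR : ∀ z ∈ P00 ∪ P11, -(c-1) ≤ 2*z ∧ 2*z ≤ c - 1 := by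
      intro z hz
      rcases Finset.mem_union.mp hz with h|h
      · obtain ⟨a, ha, b, hb, rfl⟩ := Finset.mem_sub.mp h
        obtain ⟨ha1, ha2⟩ := hbnd0A a ha
        obtain ⟨hb1, hb2⟩ := hbnd0B b hb
        constructor <;> linarith
      · obtain ⟨a, ha, b, hb, rfl⟩ := Finset.mem_sub.mp h
        obtain ⟨ha1, ha2⟩ := hbnd1A a ha
        obtain ⟨hb1, hb2⟩ := hbnd1B b hb
        constructor <;> linarith
    have hnegR : ∀ z ∈ Pneg, 2*z ≤ -c - 1 := by
      intro z hz
      obtain ⟨a, ha, b, hb, rfl⟩ := Finset.mem_sub.mp hz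
      obtain ⟨ha1, ha2⟩ := hbnd0A a ha
      obtain ⟨hb1, hb2⟩ := hbnd1B b hb
      linarith
    have hposR : ∀ z ∈ Ppos, c + 1 ≤ 2*z := by
      intro z hz
      obtain ⟨a, ha, b, hb, rfl⟩ := Finset.mem_sub.mp hz
      obtain ⟨ha1, ha2⟩ := hbnd1A a ha
      obtain ⟨hb1, hb2⟩ := hbnd0B b hb
      linarith
    have hdisj1 : Disjoint (P00 ∪ P11) Pneg := by
      rw [Finset.disjoint_left]
      intro z hz hz'
      have h1 := (hmidR z hz).1
      have h2 := hnegR z hz'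
      linarith
    have hdisj2 : Disjoint ((P00 ∪ P11) ∪ Pneg) Ppos := by
      rw [Finset.disjoint_left]
      intro z hz hz'
      have h2 := hposR z hz'
      rcases Finset.mem_union.mp hz with h|h
      · have h1 := (hmidR z h).2
        linarith
      · have h1 := hnegR z h
        linarith
    have hsubAB : ((P00 ∪ P11) ∪ Pneg) ∪ Ppos ⊆ A - B := by
      have s00 : P00 ⊆ A - B :=
        Finset.sub_subset_sub Finset.inter_subset_left Finset.inter_subset_left
      have s11 : P11 ⊆ A - B :=
        Finset.sub_subset_sub (Finset.sdiff_subset) (Finset.sdiff_subset)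
      have sneg : Pneg ⊆ A - B :=
        Finset.sub_subset_sub Finset.inter_subset_left (Finset.sdiff_subset)
      have spos : Ppos ⊆ A - B :=
        Finset.sub_subset_sub (Finset.sdiff_subset) Finset.inter_subset_left
      exact Finset.union_subset (Finset.union_subset (Finset.union_subset s00 s11) sneg) spos
    have hcards : (P00 ∪ P11).card + Pneg.card + Ppos.card ≤ (A - B).card := by
      rw [← Finset.card_union_of_disjoint hdisj1, ← Finset.card_union_of_disjoint hdisj2]
      exact Finset.card_le_card hsubAB
    -- injections
    have hNeg : (A0 - B1).card ≤ Pneg.card := by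
      apply Finset.card_le_card_of_injOn (fun z => z - c)
      · intro z hz
        obtain ⟨a, ha, b, hb, rfl⟩ := Finset.mem_sub.mp hz
        obtain ⟨b', hb', rfl⟩ := Finset.mem_image.mp hb
        apply Finset.mem_sub.mpr
        exact ⟨a, ha, b', hb', by ring⟩
      · intro x _ y _ h
        simpa using h
    have hPos : (A1 - B0).card ≤ Ppos.card := by
      apply Finset.card_le_card_of_injOn (fun z => z + c)
      · intro z hz
        obtain ⟨a, ha, b, hb, rfl⟩ := Finset.mem_sub.mp hz
        obtain ⟨a', ha', rfl⟩ := Finset.mem_image.mp ha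
        apply Finset.mem_sub.mpr
        exact ⟨a', ha', b, hb, by ring⟩
      · intro x _ y _ h
        simpa using h
    have h11card : (A1 - B1).card ≤ P11.card := by
      apply Finset.card_le_card_of_injOn (fun z => z)
      · intro z hz
        obtain ⟨a, ha, b, hb, rfl⟩ := Finset.mem_sub.mp hz
        obtain ⟨a', ha', rfl⟩ := Finset.mem_image.mp ha
        obtain ⟨b', hb', rfl⟩ := Finset.mem_image.mp hb
        apply Finset.mem_sub.mpr
        exact ⟨a', ha', b', hb', by ring⟩
      · intro x _ y _ h; exact h
    have h00card : (A0 - B0).card ≤ (P00 ∪ P11).card :=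
      Finset.card_le_card Finset.subset_union_left
    have h11card' : (A1 - B1).card ≤ (P00 ∪ P11).card :=
      le_trans h11card (Finset.card_le_card Finset.subset_union_right)
    -- IH
    have i00 := ih A0 B0 hA0sub hB0sub
    have i11 := ih A1 B1 hA1sub hB1sub
    have i01 := ih A0 B1 hA0sub hB1sub
    have i10 := ih A1 B0 hA1sub hB0sub
    have hfv := four_var (A0.card : ℝ) (A1.card : ℝ) (B0.card : ℝ) (B1.card : ℝ)
      (by positivity) (by positivity) (by positivity) (by positivity)
    calc ((A.card : ℝ) * (B.card : ℝ))^gg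
        = (((A0.card:ℝ)+(A1.card:ℝ))*((B0.card:ℝ)+(B1.card:ℝ)))^gg := by
          rw [hcardA, hcardB]; push_cast; ring_nf
    _ ≤ max (((A0.card:ℝ)*(B0.card:ℝ))^gg) (((A1.card:ℝ)*(B1.card:ℝ))^gg)
        + ((A0.card:ℝ)*(B1.card:ℝ))^gg + ((A1.card:ℝ)*(B0.card:ℝ))^gg := hfv
    _ ≤ (((P00 ∪ P11).card:ℝ)) + ((Pneg.card:ℝ)) + ((Ppos.card:ℝ)) := by
        apply add_le_add (add_le_add _ _) _
        · apply max_le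
          · exact le_trans i00 (by exact_mod_cast h00card)
          · exact le_trans i11 (by exact_mod_cast h11card')
        · exact le_trans i01 (by exact_mod_cast hNeg)
        · exact le_trans i10 (by exact_mod_cast hPos)
    _ ≤ ((A - B).card : ℝ) := by exact_mod_cast hcards

lemma cube_sub_card : ∀ m, ((cube m - cube m) : Finset ℤ).card ≤ 3^m := by
  intro m
  induction m with
  | zero =>
    have : (cube 0 - cube 0 : Finset ℤ) = {0} := by
      show (({0} : Finset ℤ) - {0} : Finset ℤ) = {0}
      rw [Finset.singleton_sub_singleton]; norm_num
    rw [this]; simp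
  | succ m ih =>
    set c : ℤ := 3^m with hc
    set D := (cube m - cube m : Finset ℤ) with hD
    have hsub : (cube (m+1) - cube (m+1) : Finset ℤ) ⊆ (D ∪ D.image (· + c)) ∪ D.image (· - c) := by
      intro z hz
      obtain ⟨x, hx, y, hy, rfl⟩ := Finset.mem_sub.mp hz
      rw [cube_succ] at hx hy
      rcases Finset.mem_union.mp hx with hx'|hx' <;> rcases Finset.mem_union.mp hy with hy'|hy'
      · exact Finset.mem_union_left _ (Finset.mem_union_left _
          (Finset.mem_sub.mpr ⟨x, hx', y, hy', rfl⟩))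
      · obtain ⟨y', hy'', rfl⟩ := Finset.mem_image.mp hy'
        apply Finset.mem_union_right
        apply Finset.mem_image.mpr
        exact ⟨x - y', Finset.mem_sub.mpr ⟨x, hx', y', hy'', rfl⟩, by ring⟩
      · obtain ⟨x', hx'', rfl⟩ := Finset.mem_image.mp hx'
        apply Finset.mem_union_left; apply Finset.mem_union_right
        apply Finset.mem_image.mpr
        exact ⟨x' - y, Finset.mem_sub.mpr ⟨x', hx'', y, hy', rfl⟩, by ring⟩
      · obtain ⟨x', hx'', rfl⟩ := Finset.mem_image.mp hx'
        obtain ⟨y', hy'', rfl⟩ := Finset.mem_image.mp hy'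
        apply Finset.mem_union_left; apply Finset.mem_union_left
        apply Finset.mem_sub.mpr
        exact ⟨x', hx'', y', hy'', by ring⟩
    calc (cube (m+1) - cube (m+1) : Finset ℤ).card
        ≤ ((D ∪ D.image (· + c)) ∪ D.image (· - c)).card := Finset.card_le_card hsub
    _ ≤ (D ∪ D.image (· + c)).card + (D.image (· - c)).card := Finset.card_union_le _ _
    _ ≤ (D.card + (D.image (· + c)).card) + (D.image (· - c)).card := by
        have := Finset.card_union_le D (D.image (· + c)); omega
    _ ≤ D.card + D.card + D.card := by
        have h1 := Finset.card_image_le (s := D) (f := (· + c))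
        have h2 := Finset.card_image_le (s := D) (f := (· - c))
        omega
    _ ≤ 3^m + 3^m + 3^m := by omega
    _ = 3^(m+1) := by ring

noncomputable def pt (t : ℝ) : EuclideanSpace ℝ (Fin 2) := WithLp.toLp 2 ![t, 0]

lemma pt_dist (a b : ℝ) : dist (pt a) (pt b) = |a - b| := by
  rw [EuclideanSpace.dist_eq]
  rw [Fin.sum_univ_two]
  show Real.sqrt (dist (![a,0] 0) (![b,0] 0)^2 + dist (![a,0] 1) (![b,0] 1)^2) = |a-b|
  simp only [Matrix.cons_val_zero, Matrix.cons_val_one, Matrix.head_cons, Real.dist_eq,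
    sub_zero, abs_zero]
  rw [show ((0:ℝ))^2 = 0 by norm_num, add_zero, sq_abs, Real.sqrt_sq_eq_abs]

lemma pt_inj : Function.Injective pt := by
  intro a b h
  have := congrArg (fun p : EuclideanSpace ℝ (Fin 2) => p 0) h
  simpa [pt] using this

lemma pt_int_inj : Function.Injective (fun z : ℤ => pt (z : ℝ)) := by
  intro a b h
  exact_mod_cast pt_inj h

lemma log_two_pos : (0:ℝ) < Real.log 2 := Real.log_pos (by norm_num)

lemma two_gg : Real.logb 2 3 = 2 * gg := by
  unfold gg Real.logb
  rw [show (4:ℝ) = 2^(2:ℕ) by norm_num, Real.log_pow]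
  push_cast
  field_simp

lemma npow_c (m : ℕ) : (((2:ℕ)^m : ℕ) : ℝ) ^ (Real.logb 2 3) = 3^m := by
  push_cast
  rw [← Real.rpow_natCast (2:ℝ) m, ← Real.rpow_mul (by norm_num), mul_comm,
    Real.rpow_mul (by norm_num), Real.rpow_natCast]
  congr 1
  exact Real.rpow_logb (by norm_num) (by norm_num) (by norm_num)

lemma k_c (k : ℕ) : ((k:ℝ) * (k:ℝ))^gg = (k:ℝ)^(Real.logb 2 3) := by
  rw [show ((k:ℝ)*(k:ℝ)) = (k:ℝ)^(2:ℕ) by ring, ← Real.rpow_natCast ((k:ℝ)) 2,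
    ← Real.rpow_mul (by positivity), two_gg]
  norm_num

theorem stmt_17 (n k m : ℕ) (hn : n = 2 ^ m) (hk : 0 < k) (hkn : k ≤ n) :
    ∃ S : Finset (EuclideanSpace ℝ (Fin 2)), S.card = n ∧
      (((((S ×ˢ S).filter (fun q => q.1 ≠ q.2)).image
          (fun q => dist q.1 q.2)).card : ℝ) ≤ (n : ℝ) ^ Real.logb 2 3) ∧
      ∀ T ⊆ S, T.card = k →
        (((((T ×ˢ T).filter (fun q => q.1 ≠ q.2)).image
            (fun q => dist q.1 q.2)).card : ℝ) ≥ (k : ℝ) ^ Real.logb 2 3 / 2 - 1) := by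
  subst hn
  refine ⟨(cube m).image (fun z : ℤ => pt (z:ℝ)), ?_, ?_, ?_⟩
  · rw [Finset.card_image_of_injective _ pt_int_inj, cube_card]
  · -- upper bound
    set S := (cube m).image (fun z : ℤ => pt (z:ℝ)) with hS
    have hsub : ((S ×ˢ S).filter (fun q => q.1 ≠ q.2)).image (fun q => dist q.1 q.2)
        ⊆ (cube m - cube m).image (fun z : ℤ => (z:ℝ)) := by
      intro d hd
      obtain ⟨⟨p, q⟩, hpq, rfl⟩ := Finset.mem_image.mp hd
      have hpq' := Finset.mem_filter.mp hpq
      obtain ⟨hp, hq⟩ := Finset.mem_product.mp hpq'.1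
      obtain ⟨x, hx, rfl⟩ := Finset.mem_image.mp hp
      obtain ⟨y, hy, rfl⟩ := Finset.mem_image.mp hq
      rw [pt_dist]
      apply Finset.mem_image.mpr
      rcases le_total y x with h|h
      · refine ⟨x - y, Finset.mem_sub.mpr ⟨x, hx, y, hy, rfl⟩, ?_⟩
        push_cast
        rw [abs_of_nonneg (by exact_mod_cast sub_nonneg.mpr h)]
      · refine ⟨y - x, Finset.mem_sub.mpr ⟨y, hy, x, hx, rfl⟩, ?_⟩
        push_cast
        rw [abs_of_nonpos (by exact_mod_cast sub_nonpos.mpr h)]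
        push_cast
        ring
    calc ((((S ×ˢ S).filter (fun q => q.1 ≠ q.2)).image (fun q => dist q.1 q.2)).card : ℝ)
        ≤ (((cube m - cube m).image (fun z : ℤ => (z:ℝ))).card : ℝ) := by
          exact_mod_cast Finset.card_le_card hsub
    _ ≤ ((cube m - cube m).card : ℝ) := by exact_mod_cast Finset.card_image_le
    _ ≤ ((3:ℝ)^m) := by exact_mod_cast cube_sub_card m
    _ = ((2^m : ℕ) : ℝ) ^ Real.logb 2 3 := (npow_c m).symm
  · -- lower bound
    intro T hT hTk
    set S := (cube m).image (fun z : ℤ => pt (z:ℝ)) with hS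
    set T' := (cube m).filter (fun z : ℤ => pt (z:ℝ) ∈ T) with hT'
    have hTeq : T = T'.image (fun z : ℤ => pt (z:ℝ)) := by
      apply Finset.Subset.antisymm
      · intro t ht
        obtain ⟨x, hx, rfl⟩ := Finset.mem_image.mp (hT ht)
        exact Finset.mem_image.mpr ⟨x, Finset.mem_filter.mpr ⟨hx, ht⟩, rfl⟩
      · intro t ht
        obtain ⟨x, hx, rfl⟩ := Finset.mem_image.mp ht
        exact (Finset.mem_filter.mp hx).2
    have hT'card : T'.card = k := by
      rw [← hTk, hTeq, Finset.card_image_of_injective _ pt_int_inj]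
    have hkey := key m T' T' (Finset.filter_subset _ _) (Finset.filter_subset _ _)
    rw [hT'card] at hkey
    set Δ := ((T ×ˢ T).filter (fun q => q.1 ≠ q.2)).image (fun q => dist q.1 q.2) with hΔ
    set D' := (T' - T' : Finset ℤ) with hD'
    -- positive part
    set Dpos := D'.filter (fun z => 0 < z) with hDpos
    set Dneg := D'.filter (fun z => z < 0) with hDneg
    have hposΔ : Dpos.card ≤ Δ.card := by
      refine Finset.card_le_card_of_injOn (fun z : ℤ => (z:ℝ)) ?_ ?_
      · intro z hz
        obtain ⟨hz1, hz2⟩ := Finset.mem_filter.mp hz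
        obtain ⟨a, ha, b, hb, rfl⟩ := Finset.mem_sub.mp hz1
        have haT : pt (a:ℝ) ∈ T := (Finset.mem_filter.mp ha).2
        have hbT : pt (b:ℝ) ∈ T := (Finset.mem_filter.mp hb).2
        apply Finset.mem_image.mpr
        refine ⟨(pt (a:ℝ), pt (b:ℝ)), ?_, ?_⟩
        · apply Finset.mem_filter.mpr
          refine ⟨Finset.mem_product.mpr ⟨haT, hbT⟩, ?_⟩
          intro hab
          have : a = b := by exact_mod_cast pt_inj hab
          omega
        · rw [pt_dist]
          rw [abs_of_pos (by exact_mod_cast hz2)]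
          push_cast; ring
      · intro x _ y _ h
        have h2 : (x:ℝ) = (y:ℝ) := h
        exact_mod_cast h2
    have hnegpos : Dneg.card ≤ Dpos.card := by
      apply Finset.card_le_card_of_injOn (fun z => -z)
      · intro z hz
        obtain ⟨hz1, hz2⟩ := Finset.mem_filter.mp hz
        obtain ⟨a, ha, b, hb, rfl⟩ := Finset.mem_sub.mp hz1
        apply Finset.mem_filter.mpr
        constructor
        · exact Finset.mem_sub.mpr ⟨b, hb, a, ha, by ring⟩
        · beta_reduce; omega
      · intro x _ y _ h
        have : -x = -y := h
        omega
    have hcover : D' ⊆ (Dneg ∪ D'.filter (fun z => z = 0)) ∪ Dpos := by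
      intro z hz
      rcases lt_trichotomy z 0 with h|h|h
      · exact Finset.mem_union_left _ (Finset.mem_union_left _ (Finset.mem_filter.mpr ⟨hz, h⟩))
      · exact Finset.mem_union_left _ (Finset.mem_union_right _ (Finset.mem_filter.mpr ⟨hz, h⟩))
      · exact Finset.mem_union_right _ (Finset.mem_filter.mpr ⟨hz, h⟩)
    have hzerocard : (D'.filter (fun z => z = 0)).card ≤ 1 := by
      apply Finset.card_le_one.mpr
      intro a ha b hb
      have := (Finset.mem_filter.mp ha).2
      have := (Finset.mem_filter.mp hb).2
      omega
    have hDcard : D'.card ≤ 2 * Δ.card + 1 := by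
      have h1 : D'.card ≤ (Dneg ∪ D'.filter (fun z => z = 0)).card + Dpos.card :=
        le_trans (Finset.card_le_card hcover) (Finset.card_union_le _ _)
      have h2 : (Dneg ∪ D'.filter (fun z => z = 0)).card ≤ Dneg.card + 1 :=
        le_trans (Finset.card_union_le _ _) (by omega)
      omega
    -- conclude
    have hkc : (k:ℝ)^(Real.logb 2 3) ≤ (D'.card : ℝ) := by
      rw [← k_c]; exact hkey
    have hDR : (D'.card : ℝ) ≤ 2 * (Δ.card : ℝ) + 1 := by exact_mod_cast hDcard
    have : (k:ℝ)^(Real.logb 2 3) / 2 - 1 ≤ (Δ.card : ℝ) := by linarith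
    exact this
end

section
/- Let p = log_4 3, and fix x > 0. Define f(x, γ) = x^p + x^{2p} + γ^p − (x+1)^p (x+γ)^p for γ > 0. Then there exists γ_0 = x·r/(1−r) > 0 with r = (1+x)^{p/(p-1)} ∈ (0,1), such that γ ↦ f(x, γ) is increasing on (0, γ_0) and decreasing on (γ_0, ∞). In particular, the minimum of f(x, ·) on (0, 1] is attained in the limit γ → 0 or at γ = 1. -/
theorem stmt_18 (p : ℝ) (hp : p = Real.logb 4 3) (x : ℝ) (hx : 0 < x)
    (f : ℝ → ℝ) (hf : f = fun γ => x ^ p + x ^ (2 * p) + γ ^ p - (x + 1) ^ p * (x + γ) ^ p)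
    (r : ℝ) (hr : r = (1 + x) ^ (p / (p - 1)))
    (γ₀ : ℝ) (hγ₀ : γ₀ = x * r / (1 - r)) :
    0 < r ∧ r < 1 ∧ 0 < γ₀ ∧
    StrictMonoOn f (Set.Ioo 0 γ₀) ∧ StrictAntiOn f (Set.Ioi γ₀) ∧
    ∀ γ ∈ Set.Ioc (0 : ℝ) 1,
      min (x ^ p + x ^ (2 * p) - (x + 1) ^ p * x ^ p) (f 1) ≤ f γ := by
  have hp0 : 0 < p := by
    rw [hp]
    apply Real.logb_pos (by norm_num) (by norm_num)
  have hp1 : p < 1 := by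
    rw [hp, Real.logb]
    rw [div_lt_one (Real.log_pos (by norm_num))]
    exact Real.log_lt_log (by norm_num) (by norm_num)
  have hpm : p - 1 < 0 := by linarith
  have h1x : (1:ℝ) < 1 + x := by linarith
  have h1x0 : (0:ℝ) < 1 + x := by linarith
  have hr0 : 0 < r := by rw [hr]; exact Real.rpow_pos_of_pos h1x0 _
  have hr1 : r < 1 := by
    rw [hr]
    exact Real.rpow_lt_one_of_one_lt_of_neg h1x (div_neg_of_pos_of_neg hp0 hpm)
  have h1r : 0 < 1 - r := by linarith
  have hγ₀0 : 0 < γ₀ := by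
    rw [hγ₀]; positivity
  -- key: r ^ (p-1) = (1+x)^p
  have hrp : r ^ (p - 1) = (1 + x) ^ p := by
    rw [hr, ← Real.rpow_mul (le_of_lt h1x0),
      div_mul_cancel₀ _ (by linarith : p - 1 ≠ 0)]
  -- derivative of f
  have hderiv : ∀ t : ℝ, 0 < t →
      HasDerivAt f (p * t ^ (p - 1) - (x + 1) ^ p * (p * (x + t) ^ (p - 1))) t := by
    intro t ht
    have hxt : 0 < x + t := by linarith
    have h1 : HasDerivAt (fun γ : ℝ => γ ^ p) (p * t ^ (p - 1)) t :=
      Real.hasDerivAt_rpow_const (Or.inl (ne_of_gt ht))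
    have h2 : HasDerivAt (fun γ : ℝ => (x + γ) ^ p) (p * (x + t) ^ (p - 1) * 1) t :=
      (Real.hasDerivAt_rpow_const (p := p) (Or.inl (ne_of_gt hxt))).comp t
        ((hasDerivAt_id t).const_add x)
    rw [hf]
    have := ((h1.const_add (x ^ p + x ^ (2 * p))).sub (h2.const_mul ((x + 1) ^ p)))
    simpa [mul_comm, mul_assoc, mul_left_comm, Pi.sub_def] using this
  -- sign of derivative
  have hsign : ∀ t : ℝ, 0 < t →
      ((t < γ₀ → 0 < p * t ^ (p - 1) - (x + 1) ^ p * (p * (x + t) ^ (p - 1))) ∧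
       (γ₀ < t → p * t ^ (p - 1) - (x + 1) ^ p * (p * (x + t) ^ (p - 1)) < 0)) := by
    intro t ht
    have hxt : 0 < x + t := by linarith
    have hq : (t / (x + t)) ^ (p - 1) = t ^ (p - 1) / (x + t) ^ (p - 1) :=
      Real.div_rpow (le_of_lt ht) (le_of_lt hxt) _
    have hxtp : 0 < (x + t) ^ (p - 1) := Real.rpow_pos_of_pos hxt _
    constructor
    · intro hlt
      -- t < γ₀ ⇒ t/(x+t) < r
      have h3 : t / (x + t) < r := by
        rw [div_lt_iff₀ hxt]
        rw [hγ₀, lt_div_iff₀ h1r] at hlt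
        nlinarith
      have h4 : r ^ (p - 1) < (t / (x + t)) ^ (p - 1) :=
        Real.rpow_lt_rpow_of_neg (by positivity) h3 hpm
      rw [hrp, hq, lt_div_iff₀ hxtp] at h4
      have : (x + 1) ^ p * (x + t) ^ (p - 1) < t ^ (p - 1) := by
        rw [add_comm x 1]; exact h4
      nlinarith
    · intro hlt
      have h3 : r < t / (x + t) := by
        rw [lt_div_iff₀ hxt]
        rw [hγ₀, div_lt_iff₀ h1r] at hlt
        nlinarith
      have h4 : (t / (x + t)) ^ (p - 1) < r ^ (p - 1) :=
        Real.rpow_lt_rpow_of_neg hr0 h3 hpm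
      rw [hrp, hq, div_lt_iff₀ hxtp] at h4
      have : t ^ (p - 1) < (x + 1) ^ p * (x + t) ^ (p - 1) := by
        rw [add_comm x 1]; nlinarith
      nlinarith
  have hcont : ∀ t : ℝ, 0 < t → ContinuousAt f t := fun t ht => (hderiv t ht).continuousAt
  have hmono : StrictMonoOn f (Set.Ioc 0 γ₀) := by
    apply strictMonoOn_of_deriv_pos (convex_Ioc 0 γ₀)
    · exact fun t ht => (hcont t ht.1).continuousWithinAt
    · intro t ht
      rw [interior_Ioc] at ht
      rw [(hderiv t ht.1).deriv]
      exact (hsign t ht.1).1 ht.2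
  have hanti : StrictAntiOn f (Set.Ici γ₀) := by
    apply strictAntiOn_of_deriv_neg (convex_Ici γ₀)
    · exact fun t ht => (hcont t (lt_of_lt_of_le hγ₀0 ht)).continuousWithinAt
    · intro t ht
      rw [interior_Ici] at ht
      rw [(hderiv t (lt_trans hγ₀0 ht)).deriv]
      exact (hsign t (lt_trans hγ₀0 ht)).2 ht
  refine ⟨hr0, hr1, hγ₀0, hmono.mono Set.Ioo_subset_Ioc_self,
    hanti.mono Set.Ioi_subset_Ici_self, ?_⟩
  intro γ hγ
  obtain ⟨hγ0, hγ1⟩ := hγ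
  rcases le_or_gt γ γ₀ with hc | hc
  · -- limit at 0 bound
    refine le_trans (min_le_left _ _) ?_
    have hL : Filter.Tendsto f (nhdsWithin 0 (Set.Ioi 0))
        (nhds (x ^ p + x ^ (2 * p) - (x + 1) ^ p * x ^ p)) := by
      have c1 : ContinuousAt (fun t : ℝ => t ^ p) 0 :=
        Real.continuousAt_rpow_const 0 p (Or.inr (le_of_lt hp0))
      have c2 : ContinuousAt (fun t : ℝ => (x + t) ^ p) 0 := by
        have : ContinuousAt (fun t : ℝ => t ^ p) (x + 0) :=
          Real.continuousAt_rpow_const _ p (Or.inl (by simpa using ne_of_gt hx))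
        exact this.comp (by fun_prop)
      have : ContinuousAt f 0 := by
        rw [hf]
        exact (((continuousAt_const.add c1)).sub (continuousAt_const.mul c2))
      have h0 : f 0 = x ^ p + x ^ (2 * p) - (x + 1) ^ p * x ^ p := by
        rw [hf]
        simp [Real.zero_rpow (ne_of_gt hp0)]
      rw [← h0]
      exact this.continuousWithinAt
    refine le_of_tendsto hL ?_
    filter_upwards [Ioo_mem_nhdsGT_of_mem ⟨le_refl 0, hγ0⟩] with t ht
    exact le_of_lt (hmono ⟨ht.1, le_trans (le_of_lt ht.2) hc⟩ ⟨hγ0, hc⟩ ht.2)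
  · refine le_trans (min_le_right _ _) ?_
    exact hanti.antitoneOn (Set.mem_Ici.2 (le_of_lt hc))
      (Set.mem_Ici.2 (le_trans (le_of_lt hc) hγ1)) hγ1
end
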